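/- SkMBiCT and SkMBiCA are equivalent: (1) any SkMBiCA derivation of A ⊢ C yields an SkMBiCT derivation of A ⊢ C; (2) any SkMBiCT derivation of T ⊢ C yields an SkMBiCA derivation of T# ⊢ C, where T# replaces commas with ⊗ᴸ, semicolons with ⊗ᴿ, and the empty tree with I. -/
import Mathlib


/-- Formulae of skew monoidal bi-closed logic:
atoms, unit I, left/right tensors and implications. -/
inductive Fma2 : Type
  | atom : ℕ → Fma2
  | I : Fma2
  | tL : Fma2 → Fma2 → Fma2   -- A ⊗ᴸ B
  | lL : Fma2 → Fma2 → Fma2   -- A ⊸ᴸ B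
  | tR : Fma2 → Fma2 → Fma2   -- A ⊗ᴿ B
  | lR : Fma2 → Fma2 → Fma2   -- A ⊸ᴿ B

/-- Derivability in the axiomatic calculus SkMBiCA: `ADer A B` means `A ⊢ B`. -/
inductive ADer : Fma2 → Fma2 → Prop
  | id {A} : ADer A A
  | comp {A B C} : ADer A B → ADer B C → ADer A C
  | tensL {A B C D} : ADer A C → ADer B D → ADer (Fma2.tL A B) (Fma2.tL C D)
  | lolliL {A B C D} : ADer C A → ADer B D → ADer (Fma2.lL A B) (Fma2.lL C D)
  | lolliR {A B C D} : ADer C A → ADer B D → ADer (Fma2.lR A B) (Fma2.lR C D)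
  | lam {A} : ADer (Fma2.tL Fma2.I A) A
  | rho {A} : ADer A (Fma2.tL A Fma2.I)
  | alpha {A B C} : ADer (Fma2.tL (Fma2.tL A B) C) (Fma2.tL A (Fma2.tL B C))
  | gamma {A B} : ADer (Fma2.tL A B) (Fma2.tR B A)
  | gammaInv {A B} : ADer (Fma2.tR A B) (Fma2.tL B A)
  | pi {A B C} : ADer (Fma2.tL A B) C → ADer A (Fma2.lL B C)
  | piInv {A B C} : ADer A (Fma2.lL B C) → ADer (Fma2.tL A B) C
  | piR {A B C} : ADer (Fma2.tR A B) C → ADer A (Fma2.lR B C)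
  | piRInv {A B C} : ADer A (Fma2.lR B C) → ADer (Fma2.tR A B) C

/-- Trees with two pairing modes: comma (for ⊗ᴸ) and semicolon (for ⊗ᴿ). -/
inductive Tr2 : Type
  | fma : Fma2 → Tr2
  | emp : Tr2
  | com : Tr2 → Tr2 → Tr2   -- (T , U)
  | sem : Tr2 → Tr2 → Tr2   -- (T ; U)

/-- Contexts: two-mode trees with a single hole. -/
inductive Ctx2 : Type
  | hole : Ctx2
  | comL : Ctx2 → Tr2 → Ctx2
  | comR : Tr2 → Ctx2 → Ctx2
  | semL : Ctx2 → Tr2 → Ctx2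
  | semR : Tr2 → Ctx2 → Ctx2

/-- Substitution of a tree into the hole of a context. -/
def plug2 : Ctx2 → Tr2 → Tr2
  | Ctx2.hole, U => U
  | Ctx2.comL C T, U => Tr2.com (plug2 C U) T
  | Ctx2.comR T C, U => Tr2.com T (plug2 C U)
  | Ctx2.semL C T, U => Tr2.sem (plug2 C U) T
  | Ctx2.semR T C, U => Tr2.sem T (plug2 C U)

/-- Derivability in the tree sequent calculus SkMBiCT: `BDer T A` means `T ⊢ A`. -/
inductive BDer : Tr2 → Fma2 → Prop
  | ax {A} : BDer (Tr2.fma A) A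
  | IR : BDer Tr2.emp Fma2.I
  | IL {T C} : BDer (plug2 T Tr2.emp) C → BDer (plug2 T (Tr2.fma Fma2.I)) C
  | tLL {T A B C} : BDer (plug2 T (Tr2.com (Tr2.fma A) (Tr2.fma B))) C →
      BDer (plug2 T (Tr2.fma (Fma2.tL A B))) C
  | tLR {T U A B} : BDer T A → BDer U B → BDer (Tr2.com T U) (Fma2.tL A B)
  | tRL {T A B C} : BDer (plug2 T (Tr2.sem (Tr2.fma A) (Tr2.fma B))) C →
      BDer (plug2 T (Tr2.fma (Fma2.tR A B))) C
  | tRR {T U A B} : BDer T A → BDer U B → BDer (Tr2.sem T U) (Fma2.tR A B)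
  | lLL {T U A B C} : BDer U A → BDer (plug2 T (Tr2.fma B)) C →
      BDer (plug2 T (Tr2.com (Tr2.fma (Fma2.lL A B)) U)) C
  | lLR {T A B} : BDer (Tr2.com T (Tr2.fma A)) B → BDer T (Fma2.lL A B)
  | lRL {T U A B C} : BDer U A → BDer (plug2 T (Tr2.fma B)) C →
      BDer (plug2 T (Tr2.sem (Tr2.fma (Fma2.lR A B)) U)) C
  | lRR {T A B} : BDer (Tr2.sem T (Tr2.fma A)) B → BDer T (Fma2.lR A B)
  | assocL {T U₀ U₁ U₂ C} : BDer (plug2 T (Tr2.com U₀ (Tr2.com U₁ U₂))) C →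
      BDer (plug2 T (Tr2.com (Tr2.com U₀ U₁) U₂)) C
  | assocR {T U₀ U₁ U₂ C} : BDer (plug2 T (Tr2.sem (Tr2.sem U₀ U₁) U₂)) C →
      BDer (plug2 T (Tr2.sem U₀ (Tr2.sem U₁ U₂))) C
  | comm {T U₀ U₁ C} : BDer (plug2 T (Tr2.com U₀ U₁)) C →
      BDer (plug2 T (Tr2.sem U₁ U₀)) C
  | commInv {T U₀ U₁ C} : BDer (plug2 T (Tr2.sem U₁ U₀)) C →
      BDer (plug2 T (Tr2.com U₀ U₁)) C
  | unitLL {T U C} : BDer (plug2 T U) C → BDer (plug2 T (Tr2.com Tr2.emp U)) C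
  | unitRL {T U C} : BDer (plug2 T (Tr2.com U Tr2.emp)) C → BDer (plug2 T U) C
  | unitLR {T U C} : BDer (plug2 T U) C → BDer (plug2 T (Tr2.sem U Tr2.emp)) C
  | unitRR {T U C} : BDer (plug2 T (Tr2.sem Tr2.emp U)) C → BDer (plug2 T U) C

/-- `T#`: turn a two-mode tree into a formula, replacing commas with ⊗ᴸ,
semicolons with ⊗ᴿ, and `-` with `I`. -/
def Tr2.sharp : Tr2 → Fma2
  | Tr2.fma A => A
  | Tr2.emp => Fma2.I
  | Tr2.com T U => Fma2.tL T.sharp U.sharp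
  | Tr2.sem T U => Fma2.tR T.sharp U.sharp

/-! ### Auxiliary machinery -/

namespace SkAux

open Fma2 Tr2 Ctx2

/-- Composition of contexts. -/
def compCtx : Ctx2 → Ctx2 → Ctx2
  | Ctx2.hole, d => d
  | Ctx2.comL c t, d => Ctx2.comL (compCtx c d) t
  | Ctx2.comR t c, d => Ctx2.comR t (compCtx c d)
  | Ctx2.semL c t, d => Ctx2.semL (compCtx c d) t
  | Ctx2.semR t c, d => Ctx2.semR t (compCtx c d)

lemma plug_compCtx (c d : Ctx2) (X : Tr2) :
    plug2 (compCtx c d) X = plug2 c (plug2 d X) := by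
  induction c <;> simp [compCtx, plug2, *]

lemma plug_eq_fma {U : Ctx2} {A X : Fma2} (h : plug2 U (Tr2.fma A) = Tr2.fma X) :
    U = Ctx2.hole ∧ A = X := by
  cases U <;> simp [plug2] at h ⊢ <;> exact h

lemma plug_eq_emp {U : Ctx2} {A : Fma2} (h : plug2 U (Tr2.fma A) = Tr2.emp) : False := by
  cases U <;> simp [plug2] at h

lemma plug_eq_com {U : Ctx2} {A : Fma2} {X Y : Tr2}
    (h : plug2 U (Tr2.fma A) = Tr2.com X Y) :
    (∃ V, U = Ctx2.comL V Y ∧ plug2 V (Tr2.fma A) = X) ∨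
    (∃ V, U = Ctx2.comR X V ∧ plug2 V (Tr2.fma A) = Y) := by
  cases U <;> simp [plug2] at h
  · obtain ⟨h1, h2⟩ := h
    exact Or.inl ⟨_, by rw [h2], h1⟩
  · obtain ⟨h1, h2⟩ := h
    exact Or.inr ⟨_, by rw [h1], h2⟩

lemma plug_eq_sem {U : Ctx2} {A : Fma2} {X Y : Tr2}
    (h : plug2 U (Tr2.fma A) = Tr2.sem X Y) :
    (∃ V, U = Ctx2.semL V Y ∧ plug2 V (Tr2.fma A) = X) ∨
    (∃ V, U = Ctx2.semR X V ∧ plug2 V (Tr2.fma A) = Y) := by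
  cases U <;> simp [plug2] at h
  · obtain ⟨h1, h2⟩ := h
    exact Or.inl ⟨_, by rw [h2], h1⟩
  · obtain ⟨h1, h2⟩ := h
    exact Or.inr ⟨_, by rw [h1], h2⟩

/-- Splitting lemma: if a tree is simultaneously `plug2 U (fma A)` (a marked leaf)
and `plug2 T S` (a marked subtree), then either the leaf is inside `S`, or the two
positions are disjoint (witnessed by a two-hole context). -/
lemma splitLemma {A : Fma2} :
    ∀ (T U : Ctx2) (S : Tr2), plug2 U (Tr2.fma A) = plug2 T S →
    (∃ U', U = compCtx T U' ∧ plug2 U' (Tr2.fma A) = S) ∨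
    (∃ c : Tr2 → Ctx2, ∃ d : Tr2 → Ctx2,
      (∀ X Y, plug2 (c Y) X = plug2 (d X) Y) ∧ U = c S ∧ T = d (Tr2.fma A)) := by
  intro T
  induction T with
  | hole =>
    intro U S h
    exact Or.inl ⟨U, rfl, h⟩
  | comL T' R ih =>
    intro U S h
    cases U with
    | hole => simp [plug2] at h
    | comL U1 R1 =>
      simp [plug2] at h
      obtain ⟨h1, rfl⟩ := h
      rcases ih U1 S h1 with ⟨U', rfl, hS⟩ | ⟨c, d, hcd, rfl, hT⟩
      · exact Or.inl ⟨U', rfl, hS⟩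
      · refine Or.inr ⟨fun Y => Ctx2.comL (c Y) R1, fun X => Ctx2.comL (d X) R1,
          fun X Y => by simp [plug2, hcd], rfl, by simp only [← hT]⟩
    | comR L U1 =>
      simp [plug2] at h
      obtain ⟨h1, h2⟩ := h
      refine Or.inr ⟨fun Y => Ctx2.comR (plug2 T' Y) U1, fun X => Ctx2.comL T' (plug2 U1 X),
        fun X Y => by simp [plug2], by simp only [h1], by simp only [h2]⟩
    | semL U1 R1 => simp [plug2] at h
    | semR L U1 => simp [plug2] at h
  | comR L T' ih =>
    intro U S h
    cases U with
    | hole => simp [plug2] at h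
    | comR L1 U1 =>
      simp [plug2] at h
      obtain ⟨rfl, h1⟩ := h
      rcases ih U1 S h1 with ⟨U', rfl, hS⟩ | ⟨c, d, hcd, rfl, hT⟩
      · exact Or.inl ⟨U', rfl, hS⟩
      · refine Or.inr ⟨fun Y => Ctx2.comR L1 (c Y), fun X => Ctx2.comR L1 (d X),
          fun X Y => by simp [plug2, hcd], rfl, by simp only [← hT]⟩
    | comL U1 R1 =>
      simp [plug2] at h
      obtain ⟨h1, h2⟩ := h
      refine Or.inr ⟨fun Y => Ctx2.comL U1 (plug2 T' Y), fun X => Ctx2.comR (plug2 U1 X) T',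
        fun X Y => by simp [plug2], by simp only [h2], by simp only [h1]⟩
    | semL U1 R1 => simp [plug2] at h
    | semR L1 U1 => simp [plug2] at h
  | semL T' R ih =>
    intro U S h
    cases U with
    | hole => simp [plug2] at h
    | semL U1 R1 =>
      simp [plug2] at h
      obtain ⟨h1, rfl⟩ := h
      rcases ih U1 S h1 with ⟨U', rfl, hS⟩ | ⟨c, d, hcd, rfl, hT⟩
      · exact Or.inl ⟨U', rfl, hS⟩
      · refine Or.inr ⟨fun Y => Ctx2.semL (c Y) R1, fun X => Ctx2.semL (d X) R1,
          fun X Y => by simp [plug2, hcd], rfl, by simp only [← hT]⟩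
    | semR L U1 =>
      simp [plug2] at h
      obtain ⟨h1, h2⟩ := h
      refine Or.inr ⟨fun Y => Ctx2.semR (plug2 T' Y) U1, fun X => Ctx2.semL T' (plug2 U1 X),
        fun X Y => by simp [plug2], by simp only [h1], by simp only [h2]⟩
    | comL U1 R1 => simp [plug2] at h
    | comR L U1 => simp [plug2] at h
  | semR L T' ih =>
    intro U S h
    cases U with
    | hole => simp [plug2] at h
    | semR L1 U1 =>
      simp [plug2] at h
      obtain ⟨rfl, h1⟩ := h
      rcases ih U1 S h1 with ⟨U', rfl, hS⟩ | ⟨c, d, hcd, rfl, hT⟩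
      · exact Or.inl ⟨U', rfl, hS⟩
      · refine Or.inr ⟨fun Y => Ctx2.semR L1 (c Y), fun X => Ctx2.semR L1 (d X),
          fun X Y => by simp [plug2, hcd], rfl, by simp only [← hT]⟩
    | semL U1 R1 =>
      simp [plug2] at h
      obtain ⟨h1, h2⟩ := h
      refine Or.inr ⟨fun Y => Ctx2.semL U1 (plug2 T' Y), fun X => Ctx2.semR (plug2 U1 X) T',
        fun X Y => by simp [plug2], by simp only [h2], by simp only [h1]⟩
    | comL U1 R1 => simp [plug2] at h
    | comR L1 U1 => simp [plug2] at h

/-! ### Direction 2: tree calculus to axiomatic calculus -/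

lemma tensR {A B C D : Fma2} (h1 : ADer A C) (h2 : ADer B D) :
    ADer (Fma2.tR A B) (Fma2.tR C D) :=
  ADer.comp ADer.gammaInv (ADer.comp (ADer.tensL h2 h1) ADer.gamma)

lemma sharp_mono {X Y : Tr2} (h : ADer X.sharp Y.sharp) :
    ∀ T : Ctx2, ADer (plug2 T X).sharp (plug2 T Y).sharp := by
  intro T
  induction T with
  | hole => exact h
  | comL c t ih => exact ADer.tensL ih ADer.id
  | comR t c ih => exact ADer.tensL ADer.id ih
  | semL c t ih => exact tensR ih ADer.id
  | semR t c ih => exact tensR ADer.id ih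

theorem toADer : ∀ {T C}, BDer T C → ADer T.sharp C := by
  intro T C d
  induction d with
  | ax => exact ADer.id
  | IR => exact ADer.id
  | @IL T C h ih =>
      exact ADer.comp (sharp_mono (X := Tr2.fma Fma2.I) (Y := Tr2.emp) ADer.id _) ih
  | @tLL T A B C h ih =>
      exact ADer.comp (sharp_mono (X := Tr2.fma (Fma2.tL A B))
        (Y := Tr2.com (Tr2.fma A) (Tr2.fma B)) ADer.id _) ih
  | tLR h1 h2 ih1 ih2 => exact ADer.tensL ih1 ih2
  | @tRL T A B C h ih =>
      exact ADer.comp (sharp_mono (X := Tr2.fma (Fma2.tR A B))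
        (Y := Tr2.sem (Tr2.fma A) (Tr2.fma B)) ADer.id _) ih
  | tRR h1 h2 ih1 ih2 => exact tensR ih1 ih2
  | @lLL T U A B C h1 h2 ih1 ih2 =>
      refine ADer.comp (sharp_mono (X := Tr2.com (Tr2.fma (Fma2.lL A B)) U)
        (Y := Tr2.fma B) ?_ _) ih2
      exact ADer.comp (ADer.tensL ADer.id ih1) (ADer.piInv ADer.id)
  | lLR h ih => exact ADer.pi ih
  | @lRL T U A B C h1 h2 ih1 ih2 =>
      refine ADer.comp (sharp_mono (X := Tr2.sem (Tr2.fma (Fma2.lR A B)) U)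
        (Y := Tr2.fma B) ?_ _) ih2
      exact ADer.comp (tensR ADer.id ih1) (ADer.piRInv ADer.id)
  | lRR h ih => exact ADer.piR ih
  | @assocL T U0 U1 U2 C h ih =>
      exact ADer.comp (sharp_mono (X := Tr2.com (Tr2.com U0 U1) U2)
        (Y := Tr2.com U0 (Tr2.com U1 U2)) ADer.alpha _) ih
  | @assocR T U0 U1 U2 C h ih =>
      refine ADer.comp (sharp_mono (X := Tr2.sem U0 (Tr2.sem U1 U2))
        (Y := Tr2.sem (Tr2.sem U0 U1) U2) ?_ _) ih
      exact ADer.comp ADer.gammaInv (ADer.comp (ADer.tensL ADer.gammaInv ADer.id)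
        (ADer.comp ADer.alpha (ADer.comp (ADer.tensL ADer.id ADer.gamma) ADer.gamma)))
  | @comm T U0 U1 C h ih =>
      exact ADer.comp (sharp_mono (X := Tr2.sem U1 U0) (Y := Tr2.com U0 U1)
        ADer.gammaInv _) ih
  | @commInv T U0 U1 C h ih =>
      exact ADer.comp (sharp_mono (X := Tr2.com U0 U1) (Y := Tr2.sem U1 U0)
        ADer.gamma _) ih
  | @unitLL T Ut C h ih =>
      exact ADer.comp (sharp_mono (X := Tr2.com Tr2.emp Ut) (Y := Ut) ADer.lam _) ih
  | @unitRL T Ut C h ih =>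
      exact ADer.comp (sharp_mono (X := Ut) (Y := Tr2.com Ut Tr2.emp) ADer.rho _) ih
  | @unitLR T Ut C h ih =>
      exact ADer.comp (sharp_mono (X := Tr2.sem Ut Tr2.emp) (Y := Ut)
        (ADer.comp ADer.gammaInv ADer.lam) _) ih
  | @unitRR T Ut C h ih =>
      exact ADer.comp (sharp_mono (X := Ut) (Y := Tr2.sem Tr2.emp Ut)
        (ADer.comp ADer.rho ADer.gamma) _) ih

/-! ### Cut admissibility machinery -/

/-- Cut admissibility at a fixed cut formula. -/
def CutAt (B : Fma2) : Prop :=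
  ∀ {Tl : Tr2}, BDer Tl B → ∀ (U : Ctx2) {C}, BDer (plug2 U (Tr2.fma B)) C → BDer (plug2 U Tl) C

lemma plug2_TV (T V Td : Ctx2) (X : Tr2) :
    plug2 (compCtx (compCtx T V) Td) X = plug2 T (plug2 V (plug2 Td X)) := by
  rw [plug_compCtx, plug_compCtx]

/-- Master lemma for principal cut cases: induction on the left derivation;
left and structural rules commute uniformly, right rules are handled by the
supplied hypotheses. -/
lemma mainLeft (B : Fma2) (H : Ctx2 → Fma2 → Prop) (V : Ctx2)
    (hax : ∀ T C, H T C → BDer (plug2 T (plug2 V (Tr2.fma B))) C)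
    (hIR : B = Fma2.I → ∀ T C, H T C → BDer (plug2 T (plug2 V Tr2.emp)) C)
    (htLR : ∀ B1 B2, B = Fma2.tL B1 B2 → ∀ T1 T2, BDer T1 B1 → BDer T2 B2 →
      ∀ T C, H T C → BDer (plug2 T (plug2 V (Tr2.com T1 T2))) C)
    (htRR : ∀ B1 B2, B = Fma2.tR B1 B2 → ∀ T1 T2, BDer T1 B1 → BDer T2 B2 →
      ∀ T C, H T C → BDer (plug2 T (plug2 V (Tr2.sem T1 T2))) C)
    (hlLR : ∀ B1 B2, B = Fma2.lL B1 B2 → ∀ S, BDer (Tr2.com S (Tr2.fma B1)) B2 →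
      ∀ T C, H T C → BDer (plug2 T (plug2 V S)) C)
    (hlRR : ∀ B1 B2, B = Fma2.lR B1 B2 → ∀ S, BDer (Tr2.sem S (Tr2.fma B1)) B2 →
      ∀ T C, H T C → BDer (plug2 T (plug2 V S)) C) :
    ∀ {Tl}, BDer Tl B → ∀ T C, H T C → BDer (plug2 T (plug2 V Tl)) C := by
  have gen : ∀ {Tl F}, BDer Tl F → F = B → ∀ T C, H T C → BDer (plug2 T (plug2 V Tl)) C := by
    intro Tl F d
    induction d with
    | ax => intro hF T C hH; subst hF; exact hax T C hH
    | IR => intro hF T C hH; exact hIR hF.symm T C hH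
    | @IL Td F0 h ih =>
        intro hF T C hH
        rw [← plug2_TV]
        exact BDer.IL (by rw [plug2_TV]; exact ih hF T C hH)
    | @tLL Td A1 A2 F0 h ih =>
        intro hF T C hH
        rw [← plug2_TV]
        exact BDer.tLL (by rw [plug2_TV]; exact ih hF T C hH)
    | @tLR T1 T2 B1 B2 h1 h2 ih1 ih2 =>
        intro hF T C hH; exact htLR B1 B2 hF.symm T1 T2 h1 h2 T C hH
    | @tRL Td A1 A2 F0 h ih =>
        intro hF T C hH
        rw [← plug2_TV]
        exact BDer.tRL (by rw [plug2_TV]; exact ih hF T C hH)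
    | @tRR T1 T2 B1 B2 h1 h2 ih1 ih2 =>
        intro hF T C hH; exact htRR B1 B2 hF.symm T1 T2 h1 h2 T C hH
    | @lLL Td Ur A1 A2 F0 h1 h2 ih1 ih2 =>
        intro hF T C hH
        rw [← plug2_TV]
        exact BDer.lLL h1 (by rw [plug2_TV]; exact ih2 hF T C hH)
    | @lLR T1 A1 A2 h ih =>
        intro hF T C hH; exact hlLR A1 A2 hF.symm T1 h T C hH
    | @lRL Td Ur A1 A2 F0 h1 h2 ih1 ih2 =>
        intro hF T C hH
        rw [← plug2_TV]
        exact BDer.lRL h1 (by rw [plug2_TV]; exact ih2 hF T C hH)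
    | @lRR T1 A1 A2 h ih =>
        intro hF T C hH; exact hlRR A1 A2 hF.symm T1 h T C hH
    | @assocL Td U0 U1 U2 F0 h ih =>
        intro hF T C hH
        rw [← plug2_TV]
        exact BDer.assocL (by rw [plug2_TV]; exact ih hF T C hH)
    | @assocR Td U0 U1 U2 F0 h ih =>
        intro hF T C hH
        rw [← plug2_TV]
        exact BDer.assocR (by rw [plug2_TV]; exact ih hF T C hH)
    | @comm Td U0 U1 F0 h ih =>
        intro hF T C hH
        rw [← plug2_TV]
        exact BDer.comm (by rw [plug2_TV]; exact ih hF T C hH)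
    | @commInv Td U0 U1 F0 h ih =>
        intro hF T C hH
        rw [← plug2_TV]
        exact BDer.commInv (by rw [plug2_TV]; exact ih hF T C hH)
    | @unitLL Td Ut F0 h ih =>
        intro hF T C hH
        rw [← plug2_TV]
        exact BDer.unitLL (by rw [plug2_TV]; exact ih hF T C hH)
    | @unitRL Td Ut F0 h ih =>
        intro hF T C hH
        rw [← plug2_TV]
        exact BDer.unitRL (by rw [plug2_TV]; exact ih hF T C hH)
    | @unitLR Td Ut F0 h ih =>
        intro hF T C hH
        rw [← plug2_TV]
        exact BDer.unitLR (by rw [plug2_TV]; exact ih hF T C hH)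
    | @unitRR Td Ut F0 h ih =>
        intro hF T C hH
        rw [← plug2_TV]
        exact BDer.unitRR (by rw [plug2_TV]; exact ih hF T C hH)
  intro Tl dl T C hH
  exact gen dl rfl T C hH

lemma cutIAux : ∀ {Tl}, BDer Tl Fma2.I → ∀ (T : Ctx2) {C},
    BDer (plug2 T Tr2.emp) C → BDer (plug2 T Tl) C := by
  intro Tl dl T C e
  exact mainLeft Fma2.I (fun T C => BDer (plug2 T Tr2.emp) C) Ctx2.hole
    (fun T C hH => BDer.IL hH)
    (fun _ T C hH => hH)
    (fun B1 B2 h => Fma2.noConfusion h)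
    (fun B1 B2 h => Fma2.noConfusion h)
    (fun B1 B2 h => Fma2.noConfusion h)
    (fun B1 B2 h => Fma2.noConfusion h)
    dl T C e

lemma cutTLAux {B1 B2 : Fma2} (h1 : CutAt B1) (h2 : CutAt B2) :
    ∀ {Tl}, BDer Tl (Fma2.tL B1 B2) → ∀ (T : Ctx2) {C},
    BDer (plug2 T (Tr2.com (Tr2.fma B1) (Tr2.fma B2))) C → BDer (plug2 T Tl) C := by
  intro Tl dl T C e
  refine mainLeft (Fma2.tL B1 B2)
    (fun T C => BDer (plug2 T (Tr2.com (Tr2.fma B1) (Tr2.fma B2))) C) Ctx2.hole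
    (fun T C hH => BDer.tLL hH)
    (fun h => Fma2.noConfusion h)
    ?_
    (fun B1' B2' h => Fma2.noConfusion h)
    (fun B1' B2' h => Fma2.noConfusion h)
    (fun B1' B2' h => Fma2.noConfusion h)
    dl T C e
  intro B1' B2' heq T1 T2 d1 d2 T C hH
  injection heq with e1 e2
  subst e1; subst e2
  have s1 := h1 d1 (compCtx T (Ctx2.comL Ctx2.hole (Tr2.fma B2)))
    (by rw [plug_compCtx]; exact hH)
  rw [plug_compCtx] at s1
  have s2 := h2 d2 (compCtx T (Ctx2.comR T1 Ctx2.hole))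
    (by rw [plug_compCtx]; exact s1)
  rw [plug_compCtx] at s2
  exact s2

lemma cutTRAux {B1 B2 : Fma2} (h1 : CutAt B1) (h2 : CutAt B2) :
    ∀ {Tl}, BDer Tl (Fma2.tR B1 B2) → ∀ (T : Ctx2) {C},
    BDer (plug2 T (Tr2.sem (Tr2.fma B1) (Tr2.fma B2))) C → BDer (plug2 T Tl) C := by
  intro Tl dl T C e
  refine mainLeft (Fma2.tR B1 B2)
    (fun T C => BDer (plug2 T (Tr2.sem (Tr2.fma B1) (Tr2.fma B2))) C) Ctx2.hole
    (fun T C hH => BDer.tRL hH)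
    (fun h => Fma2.noConfusion h)
    (fun B1' B2' h => Fma2.noConfusion h)
    ?_
    (fun B1' B2' h => Fma2.noConfusion h)
    (fun B1' B2' h => Fma2.noConfusion h)
    dl T C e
  intro B1' B2' heq T1 T2 d1 d2 T C hH
  injection heq with e1 e2
  subst e1; subst e2
  have s1 := h1 d1 (compCtx T (Ctx2.semL Ctx2.hole (Tr2.fma B2)))
    (by rw [plug_compCtx]; exact hH)
  rw [plug_compCtx] at s1
  have s2 := h2 d2 (compCtx T (Ctx2.semR T1 Ctx2.hole))
    (by rw [plug_compCtx]; exact s1)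
  rw [plug_compCtx] at s2
  exact s2

lemma cutLLAux {B1 B2 : Fma2} (h1 : CutAt B1) (h2 : CutAt B2) :
    ∀ {Tl}, BDer Tl (Fma2.lL B1 B2) → ∀ (Ur : Tr2) (T : Ctx2) {C},
    BDer Ur B1 → BDer (plug2 T (Tr2.fma B2)) C → BDer (plug2 T (Tr2.com Tl Ur)) C := by
  intro Tl dl Ur T C e1 e2
  refine mainLeft (Fma2.lL B1 B2)
    (fun T C => BDer Ur B1 ∧ BDer (plug2 T (Tr2.fma B2)) C) (Ctx2.comL Ctx2.hole Ur)
    (fun T C hH => BDer.lLL hH.1 hH.2)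
    (fun h => Fma2.noConfusion h)
    (fun B1' B2' h => Fma2.noConfusion h)
    (fun B1' B2' h => Fma2.noConfusion h)
    ?_
    (fun B1' B2' h => Fma2.noConfusion h)
    dl T C ⟨e1, e2⟩
  intro B1' B2' heq S d' T C hH
  injection heq with q1 q2
  subst q1; subst q2
  have s1 := h1 hH.1 (Ctx2.comR S Ctx2.hole) d'
  exact h2 s1 T hH.2

lemma cutLRAux {B1 B2 : Fma2} (h1 : CutAt B1) (h2 : CutAt B2) :
    ∀ {Tl}, BDer Tl (Fma2.lR B1 B2) → ∀ (Ur : Tr2) (T : Ctx2) {C},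
    BDer Ur B1 → BDer (plug2 T (Tr2.fma B2)) C → BDer (plug2 T (Tr2.sem Tl Ur)) C := by
  intro Tl dl Ur T C e1 e2
  refine mainLeft (Fma2.lR B1 B2)
    (fun T C => BDer Ur B1 ∧ BDer (plug2 T (Tr2.fma B2)) C) (Ctx2.semL Ctx2.hole Ur)
    (fun T C hH => BDer.lRL hH.1 hH.2)
    (fun h => Fma2.noConfusion h)
    (fun B1' B2' h => Fma2.noConfusion h)
    (fun B1' B2' h => Fma2.noConfusion h)
    (fun B1' B2' h => Fma2.noConfusion h)
    ?_
    dl T C ⟨e1, e2⟩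
  intro B1' B2' heq S d' T C hH
  injection heq with q1 q2
  subst q1; subst q2
  have s1 := h1 hH.1 (Ctx2.semR S Ctx2.hole) d'
  exact h2 s1 T hH.2

/-- Core of cut admissibility: induction on the right derivation, with
principal cases delegated to the supplied handlers. -/
lemma cutCore (B : Fma2)
    (hI : B = Fma2.I → ∀ {Tl}, BDer Tl B → ∀ (T : Ctx2) {C},
      BDer (plug2 T Tr2.emp) C → BDer (plug2 T Tl) C)
    (htL : ∀ B1 B2, B = Fma2.tL B1 B2 → ∀ {Tl}, BDer Tl B → ∀ (T : Ctx2) {C},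
      BDer (plug2 T (Tr2.com (Tr2.fma B1) (Tr2.fma B2))) C → BDer (plug2 T Tl) C)
    (htR : ∀ B1 B2, B = Fma2.tR B1 B2 → ∀ {Tl}, BDer Tl B → ∀ (T : Ctx2) {C},
      BDer (plug2 T (Tr2.sem (Tr2.fma B1) (Tr2.fma B2))) C → BDer (plug2 T Tl) C)
    (hlL : ∀ B1 B2, B = Fma2.lL B1 B2 → ∀ {Tl}, BDer Tl B → ∀ (Ur : Tr2) (T : Ctx2) {C},
      BDer Ur B1 → BDer (plug2 T (Tr2.fma B2)) C → BDer (plug2 T (Tr2.com Tl Ur)) C)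
    (hlR : ∀ B1 B2, B = Fma2.lR B1 B2 → ∀ {Tl}, BDer Tl B → ∀ (Ur : Tr2) (T : Ctx2) {C},
      BDer Ur B1 → BDer (plug2 T (Tr2.fma B2)) C → BDer (plug2 T (Tr2.sem Tl Ur)) C) :
    CutAt B := by
  intro Tl dl U C e
  have gen : ∀ {S C}, BDer S C → ∀ U, S = plug2 U (Tr2.fma B) → BDer (plug2 U Tl) C := by
    intro S C e
    induction e with
    | @ax A =>
        intro U h
        obtain ⟨rfl, rfl⟩ := plug_eq_fma h.symm
        exact dl
    | IR => intro U h; exact (plug_eq_emp h.symm).elim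
    | @IL Td F0 h ih =>
        intro U hU
        rcases splitLemma Td U (Tr2.fma Fma2.I) hU.symm with ⟨U', rfl, hS⟩ | ⟨c, d, hcd, rfl, hTd⟩
        · obtain ⟨rfl, rfl⟩ := plug_eq_fma hS
          rw [plug_compCtx]
          exact hI rfl dl Td h
        · have p : plug2 Td Tr2.emp = plug2 (c Tr2.emp) (Tr2.fma B) := by rw [hTd, hcd]
          have s := ih _ p
          rw [hcd] at s
          have s2 := BDer.IL (T := d Tl) s
          rw [← hcd] at s2
          exact s2
    | @tLL Td A1 A2 F0 h ih =>
        intro U hU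
        rcases splitLemma Td U (Tr2.fma (Fma2.tL A1 A2)) hU.symm with
          ⟨U', rfl, hS⟩ | ⟨c, d, hcd, rfl, hTd⟩
        · obtain ⟨rfl, rfl⟩ := plug_eq_fma hS
          rw [plug_compCtx]
          exact htL A1 A2 rfl dl Td h
        · have p : plug2 Td (Tr2.com (Tr2.fma A1) (Tr2.fma A2)) =
              plug2 (c (Tr2.com (Tr2.fma A1) (Tr2.fma A2))) (Tr2.fma B) := by rw [hTd, hcd]
          have s := ih _ p
          rw [hcd] at s
          have s2 := BDer.tLL (T := d Tl) s
          rw [← hcd] at s2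
          exact s2
    | @tRL Td A1 A2 F0 h ih =>
        intro U hU
        rcases splitLemma Td U (Tr2.fma (Fma2.tR A1 A2)) hU.symm with
          ⟨U', rfl, hS⟩ | ⟨c, d, hcd, rfl, hTd⟩
        · obtain ⟨rfl, rfl⟩ := plug_eq_fma hS
          rw [plug_compCtx]
          exact htR A1 A2 rfl dl Td h
        · have p : plug2 Td (Tr2.sem (Tr2.fma A1) (Tr2.fma A2)) =
              plug2 (c (Tr2.sem (Tr2.fma A1) (Tr2.fma A2))) (Tr2.fma B) := by rw [hTd, hcd]
          have s := ih _ p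
          rw [hcd] at s
          have s2 := BDer.tRL (T := d Tl) s
          rw [← hcd] at s2
          exact s2
    | @tLR T1 T2 A1 A2 h1 h2 ih1 ih2 =>
        intro U hU
        rcases plug_eq_com hU.symm with ⟨V, rfl, hV⟩ | ⟨V, rfl, hV⟩
        · exact BDer.tLR (ih1 V hV.symm) h2
        · exact BDer.tLR h1 (ih2 V hV.symm)
    | @tRR T1 T2 A1 A2 h1 h2 ih1 ih2 =>
        intro U hU
        rcases plug_eq_sem hU.symm with ⟨V, rfl, hV⟩ | ⟨V, rfl, hV⟩
        · exact BDer.tRR (ih1 V hV.symm) h2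
        · exact BDer.tRR h1 (ih2 V hV.symm)
    | @lLR T1 A1 A2 h ih =>
        intro U hU
        refine BDer.lLR ?_
        exact ih (Ctx2.comL U (Tr2.fma A1)) (by simp [plug2, hU])
    | @lRR T1 A1 A2 h ih =>
        intro U hU
        refine BDer.lRR ?_
        exact ih (Ctx2.semL U (Tr2.fma A1)) (by simp [plug2, hU])
    | @lLL Td Ur A1 A2 F0 h1 h2 ih1 ih2 =>
        intro U hU
        rcases splitLemma Td U (Tr2.com (Tr2.fma (Fma2.lL A1 A2)) Ur) hU.symm with
          ⟨U', rfl, hS⟩ | ⟨c, d, hcd, rfl, hTd⟩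
        · rcases plug_eq_com hS with ⟨V, rfl, hV⟩ | ⟨V, rfl, hV⟩
          · obtain ⟨rfl, rfl⟩ := plug_eq_fma hV
            rw [plug_compCtx]
            exact hlL A1 A2 rfl dl Ur Td h1 h2
          · rw [plug_compCtx]
            exact BDer.lLL (ih1 V hV.symm) h2
        · have p : plug2 Td (Tr2.fma A2) = plug2 (c (Tr2.fma A2)) (Tr2.fma B) := by
            rw [hTd, hcd]
          have s := ih2 _ p
          rw [hcd] at s
          have s2 := BDer.lLL (T := d Tl) h1 s
          rw [← hcd] at s2
          exact s2
    | @lRL Td Ur A1 A2 F0 h1 h2 ih1 ih2 =>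
        intro U hU
        rcases splitLemma Td U (Tr2.sem (Tr2.fma (Fma2.lR A1 A2)) Ur) hU.symm with
          ⟨U', rfl, hS⟩ | ⟨c, d, hcd, rfl, hTd⟩
        · rcases plug_eq_sem hS with ⟨V, rfl, hV⟩ | ⟨V, rfl, hV⟩
          · obtain ⟨rfl, rfl⟩ := plug_eq_fma hV
            rw [plug_compCtx]
            exact hlR A1 A2 rfl dl Ur Td h1 h2
          · rw [plug_compCtx]
            exact BDer.lRL (ih1 V hV.symm) h2
        · have p : plug2 Td (Tr2.fma A2) = plug2 (c (Tr2.fma A2)) (Tr2.fma B) := by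
            rw [hTd, hcd]
          have s := ih2 _ p
          rw [hcd] at s
          have s2 := BDer.lRL (T := d Tl) h1 s
          rw [← hcd] at s2
          exact s2
    | @assocL Td U0 U1 U2 F0 h ih =>
        intro U hU
        rcases splitLemma Td U (Tr2.com (Tr2.com U0 U1) U2) hU.symm with
          ⟨U', rfl, hS⟩ | ⟨c, d, hcd, rfl, hTd⟩
        · rcases plug_eq_com hS with ⟨V, rfl, hV⟩ | ⟨V, rfl, hV⟩
          · rcases plug_eq_com hV with ⟨W, rfl, hW⟩ | ⟨W, rfl, hW⟩
            · have p : plug2 Td (Tr2.com U0 (Tr2.com U1 U2)) =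
                  plug2 (compCtx Td (Ctx2.comL W (Tr2.com U1 U2))) (Tr2.fma B) := by
                rw [plug_compCtx]; simp [plug2, hW]
              have s := ih _ p
              rw [plug_compCtx] at s
              rw [plug_compCtx]
              exact BDer.assocL (U₀ := plug2 W Tl) s
            · have p : plug2 Td (Tr2.com U0 (Tr2.com U1 U2)) =
                  plug2 (compCtx Td (Ctx2.comR U0 (Ctx2.comL W U2))) (Tr2.fma B) := by
                rw [plug_compCtx]; simp [plug2, hW]
              have s := ih _ p
              rw [plug_compCtx] at s
              rw [plug_compCtx]
              exact BDer.assocL (U₁ := plug2 W Tl) s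
          · have p : plug2 Td (Tr2.com U0 (Tr2.com U1 U2)) =
                plug2 (compCtx Td (Ctx2.comR U0 (Ctx2.comR U1 V))) (Tr2.fma B) := by
              rw [plug_compCtx]; simp [plug2, hV]
            have s := ih _ p
            rw [plug_compCtx] at s
            rw [plug_compCtx]
            exact BDer.assocL (U₂ := plug2 V Tl) s
        · have p : plug2 Td (Tr2.com U0 (Tr2.com U1 U2)) =
              plug2 (c (Tr2.com U0 (Tr2.com U1 U2))) (Tr2.fma B) := by rw [hTd, hcd]
          have s := ih _ p
          rw [hcd] at s
          have s2 := BDer.assocL (T := d Tl) s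
          rw [← hcd] at s2
          exact s2
    | @assocR Td U0 U1 U2 F0 h ih =>
        intro U hU
        rcases splitLemma Td U (Tr2.sem U0 (Tr2.sem U1 U2)) hU.symm with
          ⟨U', rfl, hS⟩ | ⟨c, d, hcd, rfl, hTd⟩
        · rcases plug_eq_sem hS with ⟨V, rfl, hV⟩ | ⟨V, rfl, hV⟩
          · have p : plug2 Td (Tr2.sem (Tr2.sem U0 U1) U2) =
                plug2 (compCtx Td (Ctx2.semL (Ctx2.semL V U1) U2)) (Tr2.fma B) := by
              rw [plug_compCtx]; simp [plug2, hV]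
            have s := ih _ p
            rw [plug_compCtx] at s
            rw [plug_compCtx]
            exact BDer.assocR (U₀ := plug2 V Tl) s
          · rcases plug_eq_sem hV with ⟨W, rfl, hW⟩ | ⟨W, rfl, hW⟩
            · have p : plug2 Td (Tr2.sem (Tr2.sem U0 U1) U2) =
                  plug2 (compCtx Td (Ctx2.semL (Ctx2.semR U0 W) U2)) (Tr2.fma B) := by
                rw [plug_compCtx]; simp [plug2, hW]
              have s := ih _ p
              rw [plug_compCtx] at s
              rw [plug_compCtx]
              exact BDer.assocR (U₁ := plug2 W Tl) s
            · have p : plug2 Td (Tr2.sem (Tr2.sem U0 U1) U2) =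
                  plug2 (compCtx Td (Ctx2.semR (Tr2.sem U0 U1) W)) (Tr2.fma B) := by
                rw [plug_compCtx]; simp [plug2, hW]
              have s := ih _ p
              rw [plug_compCtx] at s
              rw [plug_compCtx]
              exact BDer.assocR (U₂ := plug2 W Tl) s
        · have p : plug2 Td (Tr2.sem (Tr2.sem U0 U1) U2) =
              plug2 (c (Tr2.sem (Tr2.sem U0 U1) U2)) (Tr2.fma B) := by rw [hTd, hcd]
          have s := ih _ p
          rw [hcd] at s
          have s2 := BDer.assocR (T := d Tl) s
          rw [← hcd] at s2
          exact s2
    | @comm Td U0 U1 F0 h ih =>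
        intro U hU
        rcases splitLemma Td U (Tr2.sem U1 U0) hU.symm with
          ⟨U', rfl, hS⟩ | ⟨c, d, hcd, rfl, hTd⟩
        · rcases plug_eq_sem hS with ⟨V, rfl, hV⟩ | ⟨V, rfl, hV⟩
          · have p : plug2 Td (Tr2.com U0 U1) =
                plug2 (compCtx Td (Ctx2.comR U0 V)) (Tr2.fma B) := by
              rw [plug_compCtx]; simp [plug2, hV]
            have s := ih _ p
            rw [plug_compCtx] at s
            rw [plug_compCtx]
            exact BDer.comm (U₁ := plug2 V Tl) s
          · have p : plug2 Td (Tr2.com U0 U1) =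
                plug2 (compCtx Td (Ctx2.comL V U1)) (Tr2.fma B) := by
              rw [plug_compCtx]; simp [plug2, hV]
            have s := ih _ p
            rw [plug_compCtx] at s
            rw [plug_compCtx]
            exact BDer.comm (U₀ := plug2 V Tl) s
        · have p : plug2 Td (Tr2.com U0 U1) =
              plug2 (c (Tr2.com U0 U1)) (Tr2.fma B) := by rw [hTd, hcd]
          have s := ih _ p
          rw [hcd] at s
          have s2 := BDer.comm (T := d Tl) s
          rw [← hcd] at s2
          exact s2
    | @commInv Td U0 U1 F0 h ih =>
        intro U hU
        rcases splitLemma Td U (Tr2.com U0 U1) hU.symm with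
          ⟨U', rfl, hS⟩ | ⟨c, d, hcd, rfl, hTd⟩
        · rcases plug_eq_com hS with ⟨V, rfl, hV⟩ | ⟨V, rfl, hV⟩
          · have p : plug2 Td (Tr2.sem U1 U0) =
                plug2 (compCtx Td (Ctx2.semR U1 V)) (Tr2.fma B) := by
              rw [plug_compCtx]; simp [plug2, hV]
            have s := ih _ p
            rw [plug_compCtx] at s
            rw [plug_compCtx]
            exact BDer.commInv (U₀ := plug2 V Tl) s
          · have p : plug2 Td (Tr2.sem U1 U0) =
                plug2 (compCtx Td (Ctx2.semL V U0)) (Tr2.fma B) := by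
              rw [plug_compCtx]; simp [plug2, hV]
            have s := ih _ p
            rw [plug_compCtx] at s
            rw [plug_compCtx]
            exact BDer.commInv (U₁ := plug2 V Tl) s
        · have p : plug2 Td (Tr2.sem U1 U0) =
              plug2 (c (Tr2.sem U1 U0)) (Tr2.fma B) := by rw [hTd, hcd]
          have s := ih _ p
          rw [hcd] at s
          have s2 := BDer.commInv (T := d Tl) s
          rw [← hcd] at s2
          exact s2
    | @unitLL Td Ut F0 h ih =>
        intro U hU
        rcases splitLemma Td U (Tr2.com Tr2.emp Ut) hU.symm with
          ⟨U', rfl, hS⟩ | ⟨c, d, hcd, rfl, hTd⟩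
        · rcases plug_eq_com hS with ⟨V, rfl, hV⟩ | ⟨V, rfl, hV⟩
          · exact (plug_eq_emp hV).elim
          · have p : plug2 Td Ut = plug2 (compCtx Td V) (Tr2.fma B) := by
              rw [plug_compCtx, hV]
            have s := ih _ p
            rw [plug_compCtx] at s
            rw [plug_compCtx]
            exact BDer.unitLL (U := plug2 V Tl) s
        · have p : plug2 Td Ut = plug2 (c Ut) (Tr2.fma B) := by rw [hTd, hcd]
          have s := ih _ p
          rw [hcd] at s
          have s2 := BDer.unitLL (T := d Tl) s
          rw [← hcd] at s2
          exact s2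
    | @unitRL Td Ut F0 h ih =>
        intro U hU
        rcases splitLemma Td U Ut hU.symm with
          ⟨U', rfl, hS⟩ | ⟨c, d, hcd, rfl, hTd⟩
        · have p : plug2 Td (Tr2.com Ut Tr2.emp) =
              plug2 (compCtx Td (Ctx2.comL U' Tr2.emp)) (Tr2.fma B) := by
            rw [plug_compCtx]; simp [plug2, hS]
          have s := ih _ p
          rw [plug_compCtx] at s
          rw [plug_compCtx]
          exact BDer.unitRL (U := plug2 U' Tl) s
        · have p : plug2 Td (Tr2.com Ut Tr2.emp) =
              plug2 (c (Tr2.com Ut Tr2.emp)) (Tr2.fma B) := by rw [hTd, hcd]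
          have s := ih _ p
          rw [hcd] at s
          have s2 := BDer.unitRL (T := d Tl) s
          rw [← hcd] at s2
          exact s2
    | @unitLR Td Ut F0 h ih =>
        intro U hU
        rcases splitLemma Td U (Tr2.sem Ut Tr2.emp) hU.symm with
          ⟨U', rfl, hS⟩ | ⟨c, d, hcd, rfl, hTd⟩
        · rcases plug_eq_sem hS with ⟨V, rfl, hV⟩ | ⟨V, rfl, hV⟩
          · have p : plug2 Td Ut = plug2 (compCtx Td V) (Tr2.fma B) := by
              rw [plug_compCtx, hV]
            have s := ih _ p
            rw [plug_compCtx] at s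
            rw [plug_compCtx]
            exact BDer.unitLR (U := plug2 V Tl) s
          · exact (plug_eq_emp hV).elim
        · have p : plug2 Td Ut = plug2 (c Ut) (Tr2.fma B) := by rw [hTd, hcd]
          have s := ih _ p
          rw [hcd] at s
          have s2 := BDer.unitLR (T := d Tl) s
          rw [← hcd] at s2
          exact s2
    | @unitRR Td Ut F0 h ih =>
        intro U hU
        rcases splitLemma Td U Ut hU.symm with
          ⟨U', rfl, hS⟩ | ⟨c, d, hcd, rfl, hTd⟩
        · have p : plug2 Td (Tr2.sem Tr2.emp Ut) =
              plug2 (compCtx Td (Ctx2.semR Tr2.emp U')) (Tr2.fma B) := by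
            rw [plug_compCtx]; simp [plug2, hS]
          have s := ih _ p
          rw [plug_compCtx] at s
          rw [plug_compCtx]
          exact BDer.unitRR (U := plug2 U' Tl) s
        · have p : plug2 Td (Tr2.sem Tr2.emp Ut) =
              plug2 (c (Tr2.sem Tr2.emp Ut)) (Tr2.fma B) := by rw [hTd, hcd]
          have s := ih _ p
          rw [hcd] at s
          have s2 := BDer.unitRR (T := d Tl) s
          rw [← hcd] at s2
          exact s2
  exact gen e U rfl

/-- Cut admissibility for SkMBiCT. -/
theorem cutAt : ∀ B : Fma2, CutAt B := by
  intro B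
  induction B with
  | atom n =>
      exact cutCore _ (fun h => Fma2.noConfusion h)
        (fun _ _ h => Fma2.noConfusion h) (fun _ _ h => Fma2.noConfusion h)
        (fun _ _ h => Fma2.noConfusion h) (fun _ _ h => Fma2.noConfusion h)
  | I =>
      refine cutCore _ ?_ (fun _ _ h => Fma2.noConfusion h) (fun _ _ h => Fma2.noConfusion h)
        (fun _ _ h => Fma2.noConfusion h) (fun _ _ h => Fma2.noConfusion h)
      intro _ Tl dl T C e
      exact cutIAux dl T e
  | tL B1 B2 ih1 ih2 =>
      refine cutCore _ (fun h => Fma2.noConfusion h) ?_ (fun _ _ h => Fma2.noConfusion h)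
        (fun _ _ h => Fma2.noConfusion h) (fun _ _ h => Fma2.noConfusion h)
      intro B1' B2' heq
      injection heq with q1 q2
      subst q1; subst q2
      intro Tl dl T C e
      exact cutTLAux ih1 ih2 dl T e
  | lL B1 B2 ih1 ih2 =>
      refine cutCore _ (fun h => Fma2.noConfusion h) (fun _ _ h => Fma2.noConfusion h)
        (fun _ _ h => Fma2.noConfusion h) ?_ (fun _ _ h => Fma2.noConfusion h)
      intro B1' B2' heq
      injection heq with q1 q2
      subst q1; subst q2
      intro Tl dl Ur T C e1 e2
      exact cutLLAux ih1 ih2 dl Ur T e1 e2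
  | tR B1 B2 ih1 ih2 =>
      refine cutCore _ (fun h => Fma2.noConfusion h) (fun _ _ h => Fma2.noConfusion h)
        ?_ (fun _ _ h => Fma2.noConfusion h) (fun _ _ h => Fma2.noConfusion h)
      intro B1' B2' heq
      injection heq with q1 q2
      subst q1; subst q2
      intro Tl dl T C e
      exact cutTRAux ih1 ih2 dl T e
  | lR B1 B2 ih1 ih2 =>
      refine cutCore _ (fun h => Fma2.noConfusion h) (fun _ _ h => Fma2.noConfusion h)
        (fun _ _ h => Fma2.noConfusion h) (fun _ _ h => Fma2.noConfusion h) ?_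
      intro B1' B2' heq
      injection heq with q1 q2
      subst q1; subst q2
      intro Tl dl Ur T C e1 e2
      exact cutLRAux ih1 ih2 dl Ur T e1 e2

/-! ### Direction 1: axiomatic calculus to tree calculus -/

theorem toBDer : ∀ {A C : Fma2}, ADer A C → BDer (Tr2.fma A) C := by
  intro A C d
  induction d with
  | id => exact BDer.ax
  | comp d1 d2 ih1 ih2 => exact cutAt _ ih1 Ctx2.hole ih2
  | tensL d1 d2 ih1 ih2 => exact BDer.tLL (T := Ctx2.hole) (BDer.tLR ih1 ih2)
  | lolliL d1 d2 ih1 ih2 =>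
      refine BDer.lLR ?_
      exact BDer.lLL (T := Ctx2.hole) ih1 ih2
  | lolliR d1 d2 ih1 ih2 =>
      refine BDer.lRR ?_
      exact BDer.lRL (T := Ctx2.hole) ih1 ih2
  | @lam A =>
      exact BDer.tLL (T := Ctx2.hole)
        (BDer.IL (T := Ctx2.comL Ctx2.hole (Tr2.fma A))
          (BDer.unitLL (T := Ctx2.hole) BDer.ax))
  | rho => exact BDer.unitRL (T := Ctx2.hole) (BDer.tLR BDer.ax BDer.IR)
  | @alpha A B C =>
      exact BDer.tLL (T := Ctx2.hole)
        (BDer.tLL (T := Ctx2.comL Ctx2.hole (Tr2.fma C))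
          (BDer.assocL (T := Ctx2.hole) (BDer.tLR BDer.ax (BDer.tLR BDer.ax BDer.ax))))
  | gamma =>
      exact BDer.tLL (T := Ctx2.hole)
        (BDer.commInv (T := Ctx2.hole) (BDer.tRR BDer.ax BDer.ax))
  | gammaInv =>
      exact BDer.tRL (T := Ctx2.hole)
        (BDer.comm (T := Ctx2.hole) (BDer.tLR BDer.ax BDer.ax))
  | @pi A B C d ih =>
      refine BDer.lLR ?_
      exact cutAt _ (BDer.tLR (BDer.ax (A := A)) (BDer.ax (A := B))) Ctx2.hole ih
  | @piInv A B C d ih =>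
      refine BDer.tLL (T := Ctx2.hole) ?_
      have base : BDer (Tr2.com (Tr2.fma (Fma2.lL B C)) (Tr2.fma B)) C :=
        BDer.lLL (T := Ctx2.hole) BDer.ax BDer.ax
      exact cutAt _ ih (Ctx2.comL Ctx2.hole (Tr2.fma B)) base
  | @piR A B C d ih =>
      refine BDer.lRR ?_
      exact cutAt _ (BDer.tRR (BDer.ax (A := A)) (BDer.ax (A := B))) Ctx2.hole ih
  | @piRInv A B C d ih =>
      refine BDer.tRL (T := Ctx2.hole) ?_
      have base : BDer (Tr2.sem (Tr2.fma (Fma2.lR B C)) (Tr2.fma B)) C :=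
        BDer.lRL (T := Ctx2.hole) BDer.ax BDer.ax
      exact cutAt _ ih (Ctx2.semL Ctx2.hole (Tr2.fma B)) base

end SkAux

/-- Equivalence of SkMBiCA and SkMBiCT. -/
theorem SkMBiCA_equiv_SkMBiCT :
    (∀ A C : Fma2, ADer A C → BDer (Tr2.fma A) C) ∧
    (∀ (T : Tr2) (C : Fma2), BDer T C → ADer T.sharp C) :=
  ⟨fun _ _ d => SkAux.toBDer d, fun _ _ d => SkAux.toADer d⟩
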